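/- For n ∈ ℤ let e_n(x) = (2π)^{-1/2} e^{inx} on [0,2π], extended by zero to ℝ, and let ê_n denote its unitary Fourier transform. Then |ê_n(k)|² = (1 − cos(2πk)) / (2π² (n − k)²) for k ≠ n, and the scaled partial sums satisfy lim_{N→∞} Σ_{n=−N}^{N} |ê_n(N k)|² = 1 for every real k with |k| < 1 and = 0 for every real k with |k| > 1; i.e. they converge pointwise off {|k| = 1} to the characteristic function of the Fermi ball of Ω = (0,2π), which has radius κ_F = 1. -/

import Mathlib

open MeasureTheory Filter Complex
open scoped Real BigOperators Topology

noncomputable section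

/-- The unitary Fourier transform of `e_n(x) = (2π)^{-1/2} e^{inx} χ_{[0,2π]}(x)`:
`ê_n(k) = (1/(2π)) ∫_0^{2π} e^{i(n−k)x} dx`. -/
def ehat (m : ℤ) (k : ℝ) : ℂ :=
  (1 / (2 * (Real.pi : ℂ))) *
    ∫ x in (0 : ℝ)..(2 * Real.pi), Complex.exp (Complex.I * ((m : ℂ) - (k : ℂ)) * x)

lemma ehat_eq (m : ℤ) (k : ℝ) (h : k ≠ (m : ℝ)) :
    ehat m k = (1 / (2 * (Real.pi : ℂ))) *
      ((Complex.exp ((-(2 * Real.pi * k) : ℝ) * Complex.I) - 1) / (Complex.I * ((m : ℂ) - k))) := by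
  have hc : Complex.I * ((m : ℂ) - k) ≠ 0 := by
    apply mul_ne_zero Complex.I_ne_zero
    intro hz
    apply h
    have : ((m : ℝ) : ℂ) = (k : ℂ) := by push_cast; linear_combination hz
    exact_mod_cast this.symm
  rw [ehat, integral_exp_mul_complex hc]
  rw [Complex.ofReal_zero, mul_zero, Complex.exp_zero]
  congr 2
  have : Complex.I * ((m:ℂ) - k) * ((2 * Real.pi : ℝ) : ℂ) =
      (m : ℂ) * (2 * Real.pi * Complex.I) + ((-(2 * Real.pi * k) : ℝ) : ℂ) * Complex.I := by
    push_cast; ring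
  rw [this, Complex.exp_add, Complex.exp_int_mul_two_pi_mul_I, one_mul]

lemma norm_ehat_sq (m : ℤ) (k : ℝ) (h : k ≠ (m : ℝ)) :
    ‖ehat m k‖ ^ 2 = (1 - Real.cos (2 * Real.pi * k)) / (2 * Real.pi ^ 2 * ((m : ℝ) - k) ^ 2) := by
  rw [ehat_eq m k h, norm_mul]
  have hpi := Real.pi_pos
  have h1 : ‖(1 / (2 * (Real.pi : ℂ)))‖ = 1 / (2 * Real.pi) := by
    rw [norm_div, norm_one, norm_mul]
    simp [abs_of_pos hpi]
  have h2 : ‖Complex.I * ((m : ℂ) - k)‖ = |(m : ℝ) - k| := by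
    rw [norm_mul, Complex.norm_I, one_mul]
    have : (m : ℂ) - k = (((m : ℝ) - k : ℝ) : ℂ) := by push_cast; ring
    rw [this, Complex.norm_real, Real.norm_eq_abs]
  have h3 : ‖Complex.exp ((-(2 * Real.pi * k) : ℝ) * Complex.I) - 1‖ ^ 2
      = 2 - 2 * Real.cos (2 * Real.pi * k) := by
    set θ : ℝ := -(2 * Real.pi * k)
    rw [Complex.sq_norm, Complex.normSq_apply]
    simp only [Complex.sub_re, Complex.sub_im, Complex.one_re, Complex.one_im,
      Complex.exp_ofReal_mul_I_re, Complex.exp_ofReal_mul_I_im]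
    have hθ : Real.cos θ = Real.cos (2 * Real.pi * k) := by
      rw [Real.cos_neg]
    nlinarith [Real.sin_sq_add_cos_sq θ]
  rw [h1, norm_div, h2, mul_pow, div_pow, div_pow, h3, _root_.sq_abs ((m:ℝ) - k)]
  have h4 : ((m:ℝ) - k) ^ 2 ≠ 0 := by
    have : (m:ℝ) - k ≠ 0 := sub_ne_zero.mpr (fun hh => h hh.symm)
    positivity
  field_simp

lemma hasSum_ehat (a : ℝ) : HasSum (fun m : ℤ => ‖ehat m a‖ ^ 2) 1 := by
  haveI : Fact (0 < 2 * Real.pi) := ⟨by positivity⟩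
  set f : ℝ → ℂ := fun x => Complex.exp (Complex.I * (-(a : ℂ)) * x) with hf
  set g : AddCircle (2 * Real.pi) → ℂ := AddCircle.liftIoc (2 * Real.pi) 0 f with hgdef
  have hg_norm : ∀ t, ‖g t‖ = 1 := by
    intro t
    show ‖f _‖ = 1
    set x : ℝ := ((AddCircle.equivIoc (2 * Real.pi) 0) t : ℝ)
    have : Complex.I * (-(a : ℂ)) * (x : ℂ) = ((-(a * x) : ℝ) : ℂ) * Complex.I := by
      push_cast; ring
    rw [hf]
    show ‖Complex.exp (Complex.I * (-(a : ℂ)) * (x:ℂ))‖ = 1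
    rw [this, Complex.norm_exp_ofReal_mul_I]
  have hg_meas : Measurable g := by
    have : g = (Set.Ioc (0:ℝ) (0 + 2 * Real.pi)).restrict f ∘
        (AddCircle.measurableEquivIoc (2 * Real.pi) 0) := rfl
    rw [this]
    exact ((Continuous.measurable (by fun_prop)).comp measurable_subtype_coe).comp
      (AddCircle.measurableEquivIoc (2 * Real.pi) 0).measurable
  have hg : MemLp g 2 AddCircle.haarAddCircle :=
    MemLp.of_bound hg_meas.aestronglyMeasurable 1 (ae_of_all _ fun t => (hg_norm t).le)
  have hP := tsum_sq_fourierCoeff (hg.toLp g)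
  have hRHS : ∫ t : AddCircle (2 * Real.pi), ‖(hg.toLp g : AddCircle (2*Real.pi) → ℂ) t‖ ^ 2
      ∂AddCircle.haarAddCircle = 1 := by
    rw [integral_congr_ae (by filter_upwards [hg.coeFn_toLp] with t ht; rw [ht] :
      (fun t => ‖(hg.toLp g : AddCircle (2*Real.pi) → ℂ) t‖ ^ 2) =ᵐ[AddCircle.haarAddCircle]
      (fun t => ‖g t‖ ^ 2))]
    simp only [hg_norm, one_pow]
    simp
  have hcoef : ∀ m : ℤ, fourierCoeff (hg.toLp g : AddCircle (2*Real.pi) → ℂ) m = ehat (-m) a := by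
    intro m
    have h1 : fourierCoeff (hg.toLp g : AddCircle (2*Real.pi) → ℂ) m = fourierCoeff g m := by
      simp only [fourierCoeff]
      apply integral_congr_ae
      filter_upwards [hg.coeFn_toLp] with t ht
      rw [ht]
    rw [h1, hgdef, fourierCoeff_liftIoc_eq, fourierCoeffOn_eq_integral]
    rw [ehat]
    rw [zero_add]
    rw [intervalIntegral.integral_congr (g := fun x : ℝ =>
        Complex.exp (Complex.I * (((-m : ℤ) : ℂ) - (a : ℂ)) * x)) ?_]
    · simp [smul_eq_mul]
    · intro x hx
      simp only [fourier_coe_apply, hf, smul_eq_mul, ← Complex.exp_add]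
      congr 1
      have hpic : (Real.pi : ℂ) ≠ 0 := by exact_mod_cast Real.pi_ne_zero
      push_cast
      field_simp
      ring
  have htsum : ∑' m : ℤ, ‖ehat (-m) a‖ ^ 2 = 1 := by
    rw [← hRHS, ← hP]
    exact tsum_congr fun m => by rw [hcoef m]
  have htsum2 : ∑' m : ℤ, ‖ehat m a‖ ^ 2 = 1 := by
    rw [← (Equiv.neg ℤ).tsum_eq (fun m => ‖ehat m a‖ ^ 2)]
    exact htsum
  have hsummable : Summable (fun m : ℤ => ‖ehat m a‖ ^ 2) := by
    by_contra hns
    rw [tsum_eq_zero_of_not_summable hns] at htsum2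
    norm_num at htsum2
  exact htsum2 ▸ hsummable.hasSum

lemma part3 (k : ℝ) (hk : 1 < |k|) :
    Tendsto (fun N : ℕ => ∑ m ∈ Finset.Icc (-(N : ℤ)) (N : ℤ), ‖ehat m ((N : ℝ) * k)‖ ^ 2)
      atTop (𝓝 0) := by
  have hC : (0:ℝ) < Real.pi ^ 2 * (|k| - 1) ^ 2 := by
    have := Real.pi_pos
    have : |k| - 1 > 0 := by linarith
    positivity
  have hsq : Tendsto (fun N : ℕ => (3 / (Real.pi ^ 2 * (|k| - 1) ^ 2)) * (1 / (N : ℝ)))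
      atTop (𝓝 0) := by
    have h := tendsto_one_div_atTop_nhds_zero_nat (𝕜 := ℝ)
    simpa using h.const_mul (3 / (Real.pi ^ 2 * (|k| - 1) ^ 2))
  apply squeeze_zero' ?_ ?_ hsq
  · filter_upwards with N
    exact Finset.sum_nonneg fun m _ => by positivity
  · filter_upwards [eventually_ge_atTop 1] with N hN
    have hNpos : (0:ℝ) < (N:ℝ) := by exact_mod_cast hN
    have hterm : ∀ m ∈ Finset.Icc (-(N : ℤ)) (N : ℤ),
        ‖ehat m ((N : ℝ) * k)‖ ^ 2 ≤ 1 / (Real.pi ^ 2 * (|k| - 1) ^ 2 * (N:ℝ) ^ 2) := by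
      intro m hm
      simp only [Finset.mem_Icc] at hm
      have habs : |(m:ℝ)| ≤ (N:ℝ) := by
        rw [abs_le]; constructor <;> [exact_mod_cast hm.1; exact_mod_cast hm.2]
      have hlow : (N:ℝ) * (|k| - 1) ≤ |(m:ℝ) - (N:ℝ) * k| := by
        have h1 : |(N:ℝ) * k| - |(m:ℝ)| ≤ |(N:ℝ) * k - (m:ℝ)| := by
          have := abs_sub_abs_le_abs_sub ((N:ℝ) * k) ((m:ℝ))
          linarith
        rw [abs_sub_comm] at h1
        rw [abs_mul, _root_.abs_of_nonneg hNpos.le] at h1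
        nlinarith
      have hne : (N:ℝ) * k ≠ (m:ℝ) := by
        intro hEq
        rw [← hEq] at habs
        rw [abs_mul, _root_.abs_of_nonneg hNpos.le] at habs
        nlinarith
      rw [norm_ehat_sq m _ hne]
      have hden : (N:ℝ) ^ 2 * (|k| - 1) ^ 2 ≤ ((m:ℝ) - (N:ℝ) * k) ^ 2 := by
        have h2 := pow_le_pow_left₀ (by nlinarith : (0:ℝ) ≤ (N:ℝ) * (|k| - 1)) hlow 2
        rw [_root_.sq_abs] at h2
        calc (N:ℝ) ^ 2 * (|k| - 1) ^ 2 = ((N:ℝ) * (|k| - 1)) ^ 2 := by ring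
        _ ≤ _ := h2
      have hnum1 : 1 - Real.cos (2 * Real.pi * ((N:ℝ) * k)) ≤ 2 := by
        have := Real.neg_one_le_cos (2 * Real.pi * ((N:ℝ) * k)); linarith
      have hnum0 : (0:ℝ) ≤ 1 - Real.cos (2 * Real.pi * ((N:ℝ) * k)) := by
        have := Real.cos_le_one (2 * Real.pi * ((N:ℝ) * k)); linarith
      have hk1 : (0:ℝ) < |k| - 1 := by linarith
      have hd1 : (0:ℝ) < 2 * Real.pi ^ 2 * ((N:ℝ) ^ 2 * (|k| - 1) ^ 2) := by
        apply mul_pos (by positivity)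
        exact mul_pos (by positivity) (pow_pos hk1 2)
      calc (1 - Real.cos (2 * Real.pi * ((N:ℝ) * k))) / (2 * Real.pi ^ 2 * ((m:ℝ) - (N:ℝ)*k) ^ 2)
          ≤ 2 / (2 * Real.pi ^ 2 * ((N:ℝ) ^ 2 * (|k| - 1) ^ 2)) := by
            apply div_le_div₀ (by norm_num) hnum1 hd1
            nlinarith [Real.pi_pos]
        _ = 1 / (Real.pi ^ 2 * (|k| - 1) ^ 2 * (N:ℝ) ^ 2) := by
            rw [div_eq_div_iff hd1.ne' (by positivity)]
            ring
    calc ∑ m ∈ Finset.Icc (-(N : ℤ)) (N : ℤ), ‖ehat m ((N : ℝ) * k)‖ ^ 2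
        ≤ (Finset.Icc (-(N : ℤ)) (N : ℤ)).card •
            (1 / (Real.pi ^ 2 * (|k| - 1) ^ 2 * (N:ℝ) ^ 2)) :=
          Finset.sum_le_card_nsmul _ _ _ hterm
      _ = ((2 * N + 1 : ℕ) : ℝ) * (1 / (Real.pi ^ 2 * (|k| - 1) ^ 2 * (N:ℝ) ^ 2)) := by
          rw [nsmul_eq_mul]
          congr 2
          rw [Int.card_Icc]
          omega
      _ ≤ 3 / (Real.pi ^ 2 * (|k| - 1) ^ 2) * (1 / (N:ℝ)) := by
          rw [mul_one_div, div_mul_div_comm,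
            div_le_div_iff₀ (mul_pos hC (pow_pos hNpos 2)) (mul_pos hC hNpos)]
          push_cast
          nlinarith [mul_nonneg (mul_pos hC hNpos).le
            (by linarith [(by exact_mod_cast hN : (1:ℝ) ≤ (N:ℝ))] : (0:ℝ) ≤ (N:ℝ) - 1)]

lemma part2 (k : ℝ) (hk : |k| < 1) :
    Tendsto (fun N : ℕ => ∑ m ∈ Finset.Icc (-(N : ℤ)) (N : ℤ), ‖ehat m ((N : ℝ) * k)‖ ^ 2)
      atTop (𝓝 1) := by
  set C : ℝ := 1 / (Real.pi ^ 2 * (1 - |k|) ^ 2) with hCdef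
  have hk1 : (0:ℝ) < 1 - |k| := by linarith
  have hCpos : 0 < C := by rw [hCdef]; positivity
  set g : ℤ → ℝ := fun m => C * (1 / (m:ℝ) ^ 2) with hgdef
  have hfin : Tendsto (fun N : ℕ => Finset.Icc (-(N : ℤ)) (N : ℤ)) atTop atTop := by
    apply Filter.tendsto_atTop_finset_of_monotone
    · intro N M h
      apply Finset.Icc_subset_Icc
      · exact neg_le_neg (by exact_mod_cast h)
      · exact_mod_cast h
    · intro x
      refine ⟨x.natAbs, ?_⟩
      simp only [Finset.mem_Icc]
      omega
  have hcompl : Tendsto (fun N : ℕ =>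
      ∑' m : {m : ℤ // m ∉ Finset.Icc (-(N : ℤ)) (N : ℤ)}, g m) atTop (𝓝 0) :=
    (tendsto_tsum_compl_atTop_zero g).comp hfin
  have key : ∀ N : ℕ,
      1 - ∑ m ∈ Finset.Icc (-(N : ℤ)) (N : ℤ), ‖ehat m ((N : ℝ) * k)‖ ^ 2 =
      ∑' m : {m : ℤ // m ∉ Finset.Icc (-(N : ℤ)) (N : ℤ)}, ‖ehat (m:ℤ) ((N : ℝ) * k)‖ ^ 2 := by
    intro N
    have h := Summable.sum_add_tsum_subtype_compl (hasSum_ehat ((N:ℝ)*k)).summable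
      (Finset.Icc (-(N : ℤ)) (N : ℤ))
    rw [(hasSum_ehat ((N:ℝ)*k)).tsum_eq] at h
    linarith
  have hgsum : Summable g := by
    apply Summable.mul_left
    exact (Real.summable_one_div_int_pow (p := 2)).mpr one_lt_two
  have hbound : ∀ N : ℕ, ∀ m : {m : ℤ // m ∉ Finset.Icc (-(N : ℤ)) (N : ℤ)},
      ‖ehat (m:ℤ) ((N : ℝ) * k)‖ ^ 2 ≤ g (m:ℤ) := by
    intro N ⟨m, hm⟩
    simp only [Finset.mem_Icc, not_and_or, not_le] at hm
    have hmabs : (N:ℝ) < |(m:ℝ)| := by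
      rcases hm with h | h
      · rw [abs_of_neg (by exact_mod_cast (by omega : m < 0))]
        have : (N:ℤ) < -m := by omega
        exact_mod_cast this
      · rw [_root_.abs_of_pos (by exact_mod_cast (by omega : 0 < m))]
        exact_mod_cast h
    have hk0 : (0:ℝ) ≤ |k| := abs_nonneg k
    have hNk : |(N:ℝ) * k| ≤ |(m:ℝ)| * |k| := by
      rw [abs_mul, _root_.abs_of_nonneg (by positivity : (0:ℝ) ≤ (N:ℝ))]
      exact mul_le_mul_of_nonneg_right hmabs.le hk0
    have hlow : |(m:ℝ)| * (1 - |k|) ≤ |(m:ℝ) - (N:ℝ) * k| := by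
      have h1 := abs_sub_abs_le_abs_sub ((m:ℝ)) ((N:ℝ) * k)
      nlinarith [abs_nonneg ((m:ℝ))]
    have hne : (N : ℝ) * k ≠ (m:ℝ) := by
      intro hEq
      rw [← hEq] at hmabs
      rw [abs_mul, _root_.abs_of_nonneg (by positivity : (0:ℝ) ≤ (N:ℝ))] at hmabs
      nlinarith [abs_nonneg k]
    rw [norm_ehat_sq (m:ℤ) _ hne]
    have hm0 : (0:ℝ) < |(m:ℝ)| := lt_of_le_of_lt (by positivity) hmabs
    have hden : (m:ℝ) ^ 2 * (1 - |k|) ^ 2 ≤ ((m:ℝ) - (N:ℝ) * k) ^ 2 := by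
      have h2 := pow_le_pow_left₀ (by positivity : (0:ℝ) ≤ |(m:ℝ)| * (1 - |k|)) hlow 2
      rw [_root_.sq_abs] at h2
      calc (m:ℝ) ^ 2 * (1 - |k|) ^ 2 = (|(m:ℝ)| * (1 - |k|)) ^ 2 := by
            rw [mul_pow, _root_.sq_abs]
        _ ≤ _ := h2
    have hnum1 : 1 - Real.cos (2 * Real.pi * ((N:ℝ) * k)) ≤ 2 := by
      have := Real.neg_one_le_cos (2 * Real.pi * ((N:ℝ) * k)); linarith
    have hd1 : (0:ℝ) < 2 * Real.pi ^ 2 * ((m:ℝ) ^ 2 * (1 - |k|) ^ 2) := by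
      apply mul_pos (by positivity)
      apply mul_pos _ (pow_pos hk1 2)
      have : (m:ℝ) ≠ 0 := by
        intro h0; rw [h0, abs_zero] at hm0; exact lt_irrefl _ hm0
      positivity
    calc (1 - Real.cos (2 * Real.pi * ((N:ℝ) * k))) /
          (2 * Real.pi ^ 2 * ((m:ℝ) - (N:ℝ) * k) ^ 2)
        ≤ 2 / (2 * Real.pi ^ 2 * ((m:ℝ) ^ 2 * (1 - |k|) ^ 2)) := by
          apply div_le_div₀ (by norm_num) hnum1 hd1
          nlinarith [Real.pi_pos]
      _ = g (m:ℤ) := by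
          show _ = C * (1 / ((m:ℤ):ℝ) ^ 2)
          rw [hCdef]
          have hmne : ((m:ℤ):ℝ) ≠ 0 := by
            intro h0; rw [h0, abs_zero] at hm0; exact lt_irrefl _ hm0
          have hπ : Real.pi ≠ 0 := Real.pi_ne_zero
          field_simp
  have hdiff : Tendsto (fun N : ℕ =>
      1 - ∑ m ∈ Finset.Icc (-(N : ℤ)) (N : ℤ), ‖ehat m ((N : ℝ) * k)‖ ^ 2) atTop (𝓝 0) := by
    apply squeeze_zero (g := fun N : ℕ =>
        ∑' m : {m : ℤ // m ∉ Finset.Icc (-(N : ℤ)) (N : ℤ)}, g (m:ℤ)) ?_ ?_ hcompl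
    · intro N
      rw [key N]
      exact tsum_nonneg fun m => by positivity
    · intro N
      rw [key N]
      exact Summable.tsum_le_tsum (hbound N)
        ((hasSum_ehat ((N:ℝ)*k)).summable.subtype _) (hgsum.subtype _)
  have := (tendsto_const_nhds (x := (1:ℝ)) (f := atTop (α := ℕ))).sub hdiff
  simpa using this

/-- `|ê_n(k)|² = (1 − cos(2πk))/(2π²(n−k)²)` for `k ≠ n`, and the scaled sums
`Σ_{n=−N}^{N} |ê_n(Nk)|²` converge to `1` for `|k| < 1` and to `0` for `|k| > 1`,
i.e. to the characteristic function of the Fermi ball of `Ω = (0,2π)` (radius `κ_F = 1`). -/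
theorem exponential_basis_fermi_ball :
    (∀ (m : ℤ) (k : ℝ), k ≠ (m : ℝ) →
        ‖ehat m k‖ ^ 2 =
          (1 - Real.cos (2 * Real.pi * k)) / (2 * Real.pi ^ 2 * ((m : ℝ) - k) ^ 2)) ∧
      (∀ k : ℝ, |k| < 1 →
        Tendsto (fun N : ℕ => ∑ m ∈ Finset.Icc (-(N : ℤ)) (N : ℤ), ‖ehat m ((N : ℝ) * k)‖ ^ 2)
          atTop (𝓝 1)) ∧
      (∀ k : ℝ, 1 < |k| →
        Tendsto (fun N : ℕ => ∑ m ∈ Finset.Icc (-(N : ℤ)) (N : ℤ), ‖ehat m ((N : ℝ) * k)‖ ^ 2)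
          atTop (𝓝 0)) :=
  ⟨fun m k h => norm_ehat_sq m k h, fun k hk => part2 k hk, fun k hk => part3 k hk⟩
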